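/- arXiv:1309.3848 — 2 statements merged into one kernel-verified Lean document; each statement's English description precedes it below -/
import Mathlib

section
/- With the setup of Proposition 1 (L concentrated in bin H⋆, |A_n| = |A_k \ L| = Z, A_n and A_k disjoint, L ⊆ A_k), the condition int(c_{A_n}, c_L) ≥ int(c_{A_k\L}, c_L), where c_S is the normalized histogram of S and int is histogram intersection, is equivalent to h_{A_n}(H⋆) ≥ h_{A_k\L}(H⋆). -/
/-- Unnormalized color histogram of a finite pixel set. -/
def hist {Pixel : Type*} [DecidableEq Pixel] {m : ℕ} (color : Pixel → Fin m)
    (S : Finset Pixel) (j : Fin m) : ℕ :=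
  (S.filter (fun i => color i = j)).card

/-- Normalized color histogram of a finite pixel set. -/
noncomputable def nhist {Pixel : Type*} [DecidableEq Pixel] {m : ℕ} (color : Pixel → Fin m)
    (S : Finset Pixel) (j : Fin m) : ℝ :=
  (hist color S j : ℝ) / (S.card : ℝ)

theorem stmt7 {Pixel : Type*} [DecidableEq Pixel] (m : ℕ) (color : Pixel → Fin m)
    (Ak An L : Finset Pixel) (Hstar : Fin m)
    (hd : Disjoint An Ak) (hL : L ⊆ Ak) (hLne : L.Nonempty)
    (hcol : ∀ i ∈ L, color i = Hstar)
    (hZ : An.card = (Ak \ L).card) (hZpos : 0 < An.card) :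
    (∑ j, min (nhist color (Ak \ L) j) (nhist color L j)
       ≤ ∑ j, min (nhist color An j) (nhist color L j))
    ↔ hist color (Ak \ L) Hstar ≤ hist color An Hstar := by
  have hLcard : (0:ℝ) < (L.card : ℝ) := by
    exact_mod_cast Finset.card_pos.mpr hLne
  have hnL : ∀ j : Fin m, nhist color L j = if j = Hstar then 1 else 0 := by
    intro j
    by_cases hj : j = Hstar
    · subst hj
      have : L.filter (fun i => color i = j) = L :=
        Finset.filter_eq_self.mpr hcol
      simp [nhist, hist, this, div_self hLcard.ne']
    · have : L.filter (fun i => color i = j) = ∅ := by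
        apply Finset.filter_eq_empty_iff.mpr
        intro i hi h
        rw [hcol i hi] at h; exact hj h.symm
      simp [nhist, hist, this, hj]
  have key : ∀ S : Finset Pixel,
      (∑ j, min (nhist color S j) (nhist color L j)) = nhist color S Hstar := by
    intro S
    rw [Finset.sum_eq_single Hstar]
    · have h1 : nhist color S Hstar ≤ 1 := by
        unfold nhist hist
        rcases Nat.eq_zero_or_pos S.card with h | h
        · simp [h]
        · rw [div_le_one (by exact_mod_cast h)]
          exact_mod_cast Finset.card_filter_le _ _
      rw [hnL Hstar]
      simp [min_eq_left h1]
    · intro j _ hj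
      rw [hnL j]
      have : (0:ℝ) ≤ nhist color S j := by
        unfold nhist; positivity
      simp [hj, min_eq_right this]
    · intro h; exact absurd (Finset.mem_univ Hstar) h
  rw [key, key]
  unfold nhist
  rw [← hZ]
  have hZr : (0:ℝ) < (An.card : ℝ) := by exact_mod_cast hZpos
  rw [div_le_div_iff_of_pos_right hZr]
  exact_mod_cast Iff.rfl
end

section
/- Combining the previous two facts (Proposition 1 of SEEDS): if A_n and A_k are disjoint finite pixel sets, L ⊆ A_k is nonempty with all pixels colored in a single bin H⋆, and |A_n| = |A_k \ L| > 0, then int(c_{A_n}, c_L) ≥ int(c_{A_k\L}, c_L) if and only if the unnormalized sum-of-squares energy after moving L to A_n is ≥ the energy before the move. -/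
lemma hist_union {Pixel : Type*} [DecidableEq Pixel] {m : ℕ} (color : Pixel → Fin m)
    {S T : Finset Pixel} (h : Disjoint S T) (j : Fin m) :
    hist color (S ∪ T) j = hist color S j + hist color T j := by
  unfold hist
  rw [Finset.filter_union, Finset.card_union_of_disjoint (Finset.disjoint_filter_filter h)]

lemma hist_mono_color {Pixel : Type*} [DecidableEq Pixel] {m : ℕ} (color : Pixel → Fin m)
    {L : Finset Pixel} {Hstar : Fin m} (hcol : ∀ i ∈ L, color i = Hstar) (j : Fin m) :
    hist color L j = if j = Hstar then L.card else 0 := by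
  unfold hist
  split_ifs with h
  · rw [Finset.filter_true_of_mem (fun i hi => by rw [hcol i hi, h])]
  · rw [Finset.filter_false_of_mem (fun i hi hc => h (by rw [hcol i hi] at hc; exact hc.symm))]
    simp

lemma sum_min_nhist {Pixel : Type*} [DecidableEq Pixel] {m : ℕ} (color : Pixel → Fin m)
    (S L : Finset Pixel) (Hstar : Fin m) (hS : 0 < S.card) (hLc : 0 < L.card)
    (hcol : ∀ i ∈ L, color i = Hstar) :
    ∑ j, min (nhist color S j) (nhist color L j) = nhist color S Hstar := by
  have hLj : ∀ j, nhist color L j = if j = Hstar then 1 else 0 := by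
    intro j
    unfold nhist
    rw [hist_mono_color color hcol]
    split_ifs with h
    · field_simp
    · simp
  have key : ∀ j, min (nhist color S j) (nhist color L j)
      = if j = Hstar then nhist color S Hstar else 0 := by
    intro j
    rw [hLj]
    split_ifs with h
    · subst h
      refine min_eq_left ?_
      unfold nhist
      rw [div_le_one (by exact_mod_cast hS)]
      exact_mod_cast Finset.card_filter_le _ _
    · refine min_eq_right ?_
      unfold nhist
      positivity
  simp_rw [key]
  simp

theorem stmt8 {Pixel : Type*} [DecidableEq Pixel] (m : ℕ) (color : Pixel → Fin m)
    (Ak An L : Finset Pixel) (Hstar : Fin m)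
    (hd : Disjoint An Ak) (hL : L ⊆ Ak) (hLne : L.Nonempty)
    (hcol : ∀ i ∈ L, color i = Hstar)
    (hZ : An.card = (Ak \ L).card) (hZpos : 0 < An.card) :
    (∑ j, min (nhist color (Ak \ L) j) (nhist color L j)
       ≤ ∑ j, min (nhist color An j) (nhist color L j))
    ↔ (∑ j, (hist color An j)^2 + ∑ j, (hist color Ak j)^2
        ≤ ∑ j, (hist color (An ∪ L) j)^2 + ∑ j, (hist color (Ak \ L) j)^2) := by
  have hLc : 0 < L.card := Finset.card_pos.mpr hLne
  have hBc : 0 < (Ak \ L).card := hZ ▸ hZpos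
  set a := hist color An with ha
  set b := hist color (Ak \ L) with hb
  -- left side
  rw [sum_min_nhist color _ L Hstar hBc hLc hcol, sum_min_nhist color _ L Hstar hZpos hLc hcol]
  have lhs_iff : nhist color (Ak \ L) Hstar ≤ nhist color An Hstar ↔ b Hstar ≤ a Hstar := by
    unfold nhist
    rw [← hZ]
    rw [div_le_div_iff_of_pos_right (by exact_mod_cast hZpos)]
    exact Nat.cast_le
  -- right side rewrites
  have hdnL : Disjoint An L := hd.mono_right hL
  have hunion : ∀ j, hist color (An ∪ L) j = a j + hist color L j :=
    fun j => hist_union color hdnL j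
  have hAk : ∀ j, hist color Ak j = b j + hist color L j := by
    intro j
    rw [← hist_union color (Finset.sdiff_disjoint) j, Finset.sdiff_union_of_subset hL]
  have hl : ∀ j, hist color L j = if j = Hstar then L.card else 0 :=
    hist_mono_color color hcol
  have sum_l : ∀ (f : Fin m → ℕ), ∑ j, f j * hist color L j = f Hstar * L.card := by
    intro f
    simp_rw [hl, mul_ite, mul_zero]
    simp
  have expand : ∀ (f : Fin m → ℕ), ∑ j, (f j + hist color L j)^2 =
      ∑ j, f j^2 + 2 * (f Hstar * L.card) + ∑ j, (hist color L j)^2 := by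
    intro f
    rw [← sum_l f]
    simp_rw [add_sq]
    rw [Finset.sum_add_distrib, Finset.sum_add_distrib]
    simp_rw [mul_assoc]
    rw [← Finset.mul_sum]
  have rhs_iff : (∑ j, a j^2 + ∑ j, hist color Ak j^2
        ≤ ∑ j, hist color (An ∪ L) j^2 + ∑ j, b j^2) ↔ b Hstar ≤ a Hstar := by
    simp_rw [hunion, hAk]
    rw [expand a, expand b]
    constructor
    · intro h
      have := Nat.le_of_add_le_add_left (a := ∑ j, a j^2 + ∑ j, b j^2 + ∑ j, (hist color L j)^2)
        (by omega : (∑ j, a j^2 + ∑ j, b j^2 + ∑ j, (hist color L j)^2) + 2 * (b Hstar * L.card)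
          ≤ (∑ j, a j^2 + ∑ j, b j^2 + ∑ j, (hist color L j)^2) + 2 * (a Hstar * L.card))
      have h2 : b Hstar * L.card ≤ a Hstar * L.card := by omega
      exact Nat.le_of_mul_le_mul_right h2 hLc
    · intro h
      have h2 : b Hstar * L.card ≤ a Hstar * L.card := Nat.mul_le_mul_right _ h
      omega
  rw [lhs_iff, rhs_iff]
end
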